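/- Regret decomposition identity (expectation bound): Suppose for each expert e ∈ E we have constants Kₑ ≥ 0 and real steady-state rewards R̄ᵉ with R̄* = max_e R̄ᵉ attained at e*. Suppose (eₘ) and random average rewards (Xₘ) satisfy E[R̄^{eₘ} − Xₘ | 𝓕ₘ] ≤ K_{eₘ}/Tₘ almost surely, where eₘ is 𝓕ₘ-measurable and Tₘ ≥ T₀ ≥ 1. Then with Δₑ = R̄* − R̄ᵉ, the expected regret satisfies E[n·R̄* − Σ_{m=0}^{n−1} Xₘ] ≤ Σ_{e≠e*} E[Tₑ(n)]·(Δₑ + Kₑ/T₀) + K_{e*}·Σ_{m=0}^{n−1} 1/Tₘ. -/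

import Mathlib

open MeasureTheory Finset

/-- Regret decomposition identity (expectation bound): if at each iteration `m`
the conditional expected shortfall of the realized average reward `Xₘ` from the
steady-state reward of the chosen expert `eₘ` is at most `K_{eₘ}/Tₘ`, then
`E[n·R̄* − Σ Xₘ] ≤ Σ_{e≠e*} E[Tₑ(n)]·(Δₑ + Kₑ/T₀) + K_{e*}·Σ_m 1/Tₘ`. -/
theorem stmt_7 {Ω : Type*} {m0 : MeasurableSpace Ω} {μ : Measure Ω}
    [IsProbabilityMeasure μ]
    {E : Type*} [Fintype E] [DecidableEq E]
    [MeasurableSpace E] [MeasurableSingletonClass E]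
    (𝓕 : Filtration ℕ m0)
    (Rbar K : E → ℝ) (hK : ∀ e', 0 ≤ K e')
    (estar : E) (hstar : ∀ e', Rbar e' ≤ Rbar estar)
    (T : ℕ → ℝ) (T₀ : ℝ) (hT₀ : 1 ≤ T₀) (hT : ∀ m, T₀ ≤ T m)
    (e : ℕ → Ω → E) (he : ∀ m, Measurable[𝓕 m] (e m))
    (X : ℕ → Ω → ℝ) (hXmeas : ∀ m, StronglyMeasurable[𝓕 (m + 1)] (X m))
    (hX01 : ∀ m, ∀ᵐ ω ∂μ, X m ω ∈ Set.Icc (0 : ℝ) 1)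
    (hbias : ∀ m, ∀ᵐ ω ∂μ,
      (μ[fun ω' => Rbar (e m ω') - X m ω' | 𝓕 m]) ω ≤ K (e m ω) / T m)
    (n : ℕ) :
    (∫ ω, ((n : ℝ) * Rbar estar - ∑ m ∈ Finset.range n, X m ω) ∂μ) ≤
      (∑ e' ∈ Finset.univ.filter (fun e' => e' ≠ estar),
        (∫ ω, (((Finset.range n).filter (fun m => e m ω = e')).card : ℝ) ∂μ) *
          ((Rbar estar - Rbar e') + K e' / T₀)) +
      K estar * ∑ m ∈ Finset.range n, 1 / T m := by
  classical
  have hT₀pos : (0:ℝ) < T₀ := lt_of_lt_of_le one_pos hT₀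
  have hTpos : ∀ m, (0:ℝ) < T m := fun m => lt_of_lt_of_le hT₀pos (hT m)
  have heM : ∀ m, Measurable (e m) := fun m => (he m).mono (𝓕.le m) le_rfl
  have hset : ∀ m e', MeasurableSet {ω | e m ω = e'} :=
    fun m e' => heM m (measurableSet_singleton e')
  set p : ℕ → E → ℝ := fun m e' => (μ {ω | e m ω = e'}).toReal with hp
  have hp_nonneg : ∀ m e', 0 ≤ p m e' := fun m e' => ENNReal.toReal_nonneg
  have hp_le_one : ∀ m e', p m e' ≤ 1 := by
    intro m e'
    have h1 : μ {ω | e m ω = e'} ≤ 1 := prob_le_one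
    have := ENNReal.toReal_mono (by norm_num) h1
    simpa using this
  have hrep : ∀ (m : ℕ) (f : E → ℝ) (ω : Ω),
      f (e m ω) = ∑ e' ∈ Finset.univ, if e m ω = e' then f e' else 0 := by
    intro m f ω
    simp [Finset.sum_ite_eq]
  have hindint : ∀ (m : ℕ) (e' : E) (c : ℝ),
      Integrable (fun ω => if e m ω = e' then c else 0) μ := by
    intro m e' c
    have h1 : (fun ω => if e m ω = e' then c else 0)
        = Set.indicator {ω | e m ω = e'} (fun _ => c) := by
      ext ω; simp [Set.indicator_apply, Set.mem_setOf_eq]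
    rw [h1]
    exact (integrable_const c).indicator (hset m e')
  have hindval : ∀ (m : ℕ) (e' : E) (c : ℝ),
      ∫ ω, (if e m ω = e' then c else 0) ∂μ = p m e' * c := by
    intro m e' c
    have h1 : (fun ω => if e m ω = e' then c else 0)
        = Set.indicator {ω | e m ω = e'} (fun _ => c) := by
      ext ω; simp [Set.indicator_apply, Set.mem_setOf_eq]
    rw [h1, integral_indicator (hset m e'), setIntegral_const, smul_eq_mul]
    rfl
  have hintf : ∀ (m : ℕ) (f : E → ℝ), Integrable (fun ω => f (e m ω)) μ := by
    intro m f
    have h1 : (fun ω => f (e m ω))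
        = fun ω => ∑ e' ∈ Finset.univ, if e m ω = e' then f e' else 0 :=
      funext (hrep m f)
    rw [h1]
    exact integrable_finset_sum _ fun e' _ => hindint m e' (f e')
  have hintegral_f : ∀ (m : ℕ) (f : E → ℝ),
      ∫ ω, f (e m ω) ∂μ = ∑ e' ∈ Finset.univ, p m e' * f e' := by
    intro m f
    rw [show (fun ω => f (e m ω))
        = fun ω => ∑ e' ∈ Finset.univ, if e m ω = e' then f e' else 0 from
      funext (hrep m f)]
    rw [integral_finset_sum _ fun e' _ => hindint m e' (f e')]
    exact Finset.sum_congr rfl fun e' _ => hindval m e' (f e')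
  have hintX : ∀ m, Integrable (X m) μ := by
    intro m
    refine Integrable.mono' (integrable_const 1)
      ((hXmeas m).mono (𝓕.le (m+1))).aestronglyMeasurable ?_
    filter_upwards [hX01 m] with ω h
    rw [Real.norm_eq_abs, abs_le]
    exact ⟨by linarith [h.1], h.2⟩
  -- per-iteration bound
  have key : ∀ m, ∫ ω, (Rbar estar - X m ω) ∂μ ≤
      (∑ e' ∈ Finset.univ.filter (fun e' => e' ≠ estar),
        p m e' * ((Rbar estar - Rbar e') + K e' / T₀)) + K estar * (1 / T m) := by
    intro m
    have hsub : Integrable (fun ω => Rbar (e m ω) - X m ω) μ :=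
      (hintf m Rbar).sub (hintX m)
    have hcond : ∫ ω, (Rbar (e m ω) - X m ω) ∂μ ≤ ∫ ω, K (e m ω) / T m ∂μ := by
      rw [← integral_condExp (𝓕.le m) (f := fun ω => Rbar (e m ω) - X m ω)]
      exact integral_mono_ae integrable_condExp
        (hintf m fun e' => K e' / T m) (hbias m)
    have step1 : ∫ ω, (Rbar estar - X m ω) ∂μ ≤
        ∫ ω, ((Rbar estar - Rbar (e m ω)) + K (e m ω) / T m) ∂μ := by
      have hdecomp : (fun ω => Rbar estar - X m ω)
          = fun ω => (Rbar estar - Rbar (e m ω)) + (Rbar (e m ω) - X m ω) := by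
        ext ω; ring
      have hA : Integrable (fun ω => Rbar estar - Rbar (e m ω)) μ :=
        hintf m fun e' => Rbar estar - Rbar e'
      rw [hdecomp, integral_add hA hsub,
        integral_add hA (hintf m fun e' => K e' / T m)]
      linarith
    have step2 : ∫ ω, ((Rbar estar - Rbar (e m ω)) + K (e m ω) / T m) ∂μ
        = ∑ e' ∈ Finset.univ, p m e' * ((Rbar estar - Rbar e') + K e' / T m) :=
      hintegral_f m fun e' => (Rbar estar - Rbar e') + K e' / T m
    have hsplit : ∑ e' ∈ Finset.univ, p m e' * ((Rbar estar - Rbar e') + K e' / T m)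
        = (∑ e' ∈ Finset.univ.filter (fun e' => e' ≠ estar),
            p m e' * ((Rbar estar - Rbar e') + K e' / T m))
          + p m estar * ((Rbar estar - Rbar estar) + K estar / T m) := by
      rw [Finset.filter_ne', Finset.sum_erase_add]
      exact Finset.mem_univ estar
    have hbound1 : ∀ e' ∈ Finset.univ.filter (fun e' => e' ≠ estar),
        p m e' * ((Rbar estar - Rbar e') + K e' / T m)
          ≤ p m e' * ((Rbar estar - Rbar e') + K e' / T₀) := by
      intro e' _
      apply mul_le_mul_of_nonneg_left _ (hp_nonneg m e')
      have : K e' / T m ≤ K e' / T₀ := by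
        gcongr
        · exact hK e'
        · exact hT m
      linarith
    have hbound2 : p m estar * ((Rbar estar - Rbar estar) + K estar / T m)
        ≤ K estar * (1 / T m) := by
      have h0 : (Rbar estar - Rbar estar) + K estar / T m = K estar / T m := by ring
      rw [h0]
      have hKT : 0 ≤ K estar / T m := div_nonneg (hK estar) (hTpos m).le
      calc p m estar * (K estar / T m) ≤ 1 * (K estar / T m) :=
            mul_le_mul_of_nonneg_right (hp_le_one m estar) hKT
        _ = K estar * (1 / T m) := by ring
    calc ∫ ω, (Rbar estar - X m ω) ∂μ
        ≤ ∑ e' ∈ Finset.univ, p m e' * ((Rbar estar - Rbar e') + K e' / T m) := by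
          rw [← step2]; exact step1
      _ = _ + _ := hsplit
      _ ≤ (∑ e' ∈ Finset.univ.filter (fun e' => e' ≠ estar),
            p m e' * ((Rbar estar - Rbar e') + K e' / T₀)) + K estar * (1 / T m) :=
          add_le_add (Finset.sum_le_sum hbound1) hbound2
  -- assemble
  have hLHS : ∫ ω, ((n : ℝ) * Rbar estar - ∑ m ∈ Finset.range n, X m ω) ∂μ
      = ∑ m ∈ Finset.range n, ∫ ω, (Rbar estar - X m ω) ∂μ := by
    have h1 : (fun ω => (n : ℝ) * Rbar estar - ∑ m ∈ Finset.range n, X m ω)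
        = fun ω => ∑ m ∈ Finset.range n, (Rbar estar - X m ω) := by
      ext ω
      rw [Finset.sum_sub_distrib, Finset.sum_const, Finset.card_range, nsmul_eq_mul]
    rw [h1]
    exact integral_finset_sum _ fun m _ =>
      (show Integrable (fun ω => Rbar estar - X m ω) μ from
        (integrable_const _).sub (hintX m))
  have hcard : ∀ e', ∫ ω, (((Finset.range n).filter (fun m => e m ω = e')).card : ℝ) ∂μ
      = ∑ m ∈ Finset.range n, p m e' := by
    intro e'
    have hfun : (fun ω => (((Finset.range n).filter (fun m => e m ω = e')).card : ℝ))
        = fun ω => ∑ m ∈ Finset.range n, (if e m ω = e' then (1:ℝ) else 0) := by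
      ext ω
      rw [Finset.card_filter]
      push_cast
      rfl
    rw [hfun, integral_finset_sum _ fun m _ => hindint m e' 1]
    exact Finset.sum_congr rfl fun m _ => by rw [hindval m e' 1, mul_one]
  rw [hLHS]
  calc ∑ m ∈ Finset.range n, ∫ ω, (Rbar estar - X m ω) ∂μ
      ≤ ∑ m ∈ Finset.range n,
          ((∑ e' ∈ Finset.univ.filter (fun e' => e' ≠ estar),
            p m e' * ((Rbar estar - Rbar e') + K e' / T₀)) + K estar * (1 / T m)) :=
        Finset.sum_le_sum fun m _ => key m
    _ = (∑ e' ∈ Finset.univ.filter (fun e' => e' ≠ estar),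
          (∑ m ∈ Finset.range n, p m e') * ((Rbar estar - Rbar e') + K e' / T₀))
        + K estar * ∑ m ∈ Finset.range n, 1 / T m := by
        rw [Finset.sum_add_distrib, Finset.sum_comm, ← Finset.mul_sum]
        congr 1
        exact Finset.sum_congr rfl fun e' _ => by rw [Finset.sum_mul]
    _ = _ := by
        congr 1
        exact Finset.sum_congr rfl fun e' _ => by rw [hcard e']
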